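/- Two n-tuples of points in Σ ⊆ ℝ_{≥0}^r determine the same combinatorial type of n-marked grid subdivision if and only if, for each coordinate j ∈ {1,...,r}, the induced total preorders on the values 0, u_1^{(j)}, ..., u_n^{(j)} agree; i.e., the combinatorial type is equivalent to the data of the r total preorders (T_1, ..., T_r). -/

import Mathlib

/-!
STATEMENT 1 (Remark 2.10): two `n`-tuples of points in `Σ = ℝ_{≥0}^r`
determine the same combinatorial type of `n`-marked grid subdivision if and
only if, for each coordinate `j`, the induced total preorders on the values
`0, u_1^{(j)}, …, u_n^{(j)}` agree.
-/

noncomputable section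

/-- Vertex set of the subdivision of the `j`-th ray determined by the tuple `u`. -/
def Vset {n r : ℕ} (u : Fin n → Fin r → ℝ) (j : Fin r) : Set ℝ :=
  insert 0 (Set.range fun i => u i j)

/-- Closed cells (faces) of the polyhedral subdivision of `ℝ_{≥0}` with vertex
set `V`: vertices, bounded edges between consecutive vertices, and the
unbounded edge. -/
def cells1 (V : Set ℝ) : Set (Set ℝ) :=
  {I | (∃ v ∈ V, I = {v}) ∨
       (∃ a ∈ V, ∃ b ∈ V, a < b ∧ (∀ c ∈ V, ¬(a < c ∧ c < b)) ∧ I = Set.Icc a b) ∨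
       (∃ a ∈ V, (∀ c ∈ V, c ≤ a) ∧ I = Set.Ici a)}

/-- Closed cells (faces) of the grid subdivision of `ℝ_{≥0}^r` determined by
the tuple `u`: products of 1-dimensional cells. -/
def gridCells {n r : ℕ} (u : Fin n → Fin r → ℝ) : Set (Set (Fin r → ℝ)) :=
  {C | ∃ I : Fin r → Set ℝ, (∀ j, I j ∈ cells1 (Vset u j)) ∧
        C = {x | ∀ j, x j ∈ I j}}

/-- The face of the orthant `Σ = ℝ_{≥0}^r` supporting a cell, recorded via the
set of coordinates not identically vanishing on the cell.  This encodes the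
map of face posets `𝓕_𝒫 → 𝓕_Σ`. -/
def suppFace {r : ℕ} (C : Set (Fin r → ℝ)) : Set (Fin r) := {j | ∃ x ∈ C, x j ≠ 0}

/-- Two tuples have the same combinatorial type when there is an isomorphism
of the face posets of the associated grid subdivisions which lies over the
face poset of `Σ` and preserves the markings (the vertex `{u i}` is marked by
the label `i`). -/
def SameCombType {n r : ℕ} (u u' : Fin n → Fin r → ℝ) : Prop :=
  ∃ e : {C // C ∈ gridCells u} ≃o {C // C ∈ gridCells u'},
    (∀ C : {C // C ∈ gridCells u},
        suppFace ((e C : {C // C ∈ gridCells u'}) : Set (Fin r → ℝ)) =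
          suppFace (C : Set (Fin r → ℝ))) ∧
    (∀ i : Fin n, ∀ h : ({u i} : Set (Fin r → ℝ)) ∈ gridCells u,
        ((e ⟨{u i}, h⟩ : {C // C ∈ gridCells u'}) : Set (Fin r → ℝ)) =
          ({u' i} : Set (Fin r → ℝ)))

/-- The list of values `(0, u_1^{(j)}, …, u_n^{(j)})`, indexed by
`Option (Fin n)` with `none` standing for the symbol `0`. -/
def val {n r : ℕ} (u : Fin n → Fin r → ℝ) (j : Fin r) : Option (Fin n) → ℝ :=
  fun a => a.elim 0 fun i => u i j


-- ############ basics

@[simp] lemma val_none {n r : ℕ} (u : Fin n → Fin r → ℝ) (j : Fin r) : val u j none = 0 := rfl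
@[simp] lemma val_some {n r : ℕ} (u : Fin n → Fin r → ℝ) (j : Fin r) (i : Fin n) :
    val u j (some i) = u i j := rfl

lemma mem_Vset_iff {n r : ℕ} (u : Fin n → Fin r → ℝ) (j : Fin r) (x : ℝ) :
    x ∈ Vset u j ↔ ∃ a : Option (Fin n), val u j a = x := by
  constructor
  · rintro (h | ⟨i, rfl⟩)
    · exact ⟨none, h.symm⟩
    · exact ⟨some i, rfl⟩
  · rintro ⟨a, rfl⟩
    cases a with
    | none => exact Or.inl rfl
    | some i => exact Or.inr ⟨i, rfl⟩

lemma zero_mem_Vset {n r : ℕ} (u : Fin n → Fin r → ℝ) (j : Fin r) : (0:ℝ) ∈ Vset u j :=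
  Or.inl rfl

lemma Vset_nonneg {n r : ℕ} {u : Fin n → Fin r → ℝ} (hu : ∀ i j, 0 ≤ u i j) (j : Fin r)
    {x : ℝ} (hx : x ∈ Vset u j) : 0 ≤ x := by
  rcases hx with h | ⟨i, rfl⟩
  · exact le_of_eq h.symm
  · exact hu i j

/-- adjacency (consecutiveness) in a vertex set -/
def Adj (V : Set ℝ) (a b : ℝ) : Prop :=
  a ∈ V ∧ b ∈ V ∧ a < b ∧ ∀ c ∈ V, ¬(a < c ∧ c < b)

/-- product cell -/
def PC {r : ℕ} (I : Fin r → Set ℝ) : Set (Fin r → ℝ) := {x | ∀ j, x j ∈ I j}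

lemma mem_gridCells_iff {n r : ℕ} (u : Fin n → Fin r → ℝ) (C : Set (Fin r → ℝ)) :
    C ∈ gridCells u ↔ ∃ I : Fin r → Set ℝ, (∀ j, I j ∈ cells1 (Vset u j)) ∧ C = PC I :=
  Iff.rfl

lemma cells1_endpoint {V : Set ℝ} {c : Set ℝ} (hc : c ∈ cells1 V) :
    ∃ a, a ∈ V ∧ a ∈ c := by
  rcases hc with ⟨v, hv, rfl⟩ | ⟨a, ha, b, hb, hab, _, rfl⟩ | ⟨a, ha, _, rfl⟩
  · exact ⟨v, hv, rfl⟩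
  · exact ⟨a, ha, Set.left_mem_Icc.2 hab.le⟩
  · exact ⟨a, ha, Set.self_mem_Ici⟩

lemma cells1_nonempty {V : Set ℝ} {c : Set ℝ} (hc : c ∈ cells1 V) : c.Nonempty := by
  obtain ⟨a, -, ha⟩ := cells1_endpoint hc; exact ⟨a, ha⟩

lemma cells1_inter_V {V : Set ℝ} {c : Set ℝ} (hc : c ∈ cells1 V) :
    (∃ a, a ∈ V ∧ c ∩ V = {a}) ∨ (∃ a b, Adj V a b ∧ c ∩ V = {a, b}) := by
  rcases hc with ⟨v, hv, rfl⟩ | ⟨a, ha, b, hb, hab, hbet, rfl⟩ | ⟨a, ha, hmax, rfl⟩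
  · left; exact ⟨v, hv, by rw [Set.inter_eq_left.2 (Set.singleton_subset_iff.2 hv)]⟩
  · right
    refine ⟨a, b, ⟨ha, hb, hab, hbet⟩, ?_⟩
    ext x
    constructor
    · rintro ⟨⟨h1, h2⟩, hx⟩
      rcases eq_or_lt_of_le h1 with h | h
      · exact Or.inl h.symm
      rcases eq_or_lt_of_le h2 with h' | h'
      · exact Or.inr h'
      · exact absurd ⟨h, h'⟩ (hbet x hx)
    · rintro (rfl | rfl)
      · exact ⟨Set.left_mem_Icc.2 hab.le, ha⟩
      · exact ⟨Set.right_mem_Icc.2 hab.le, hb⟩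
  · left
    refine ⟨a, ha, ?_⟩
    ext x
    constructor
    · rintro ⟨h1, hx⟩; exact le_antisymm (hmax x hx) h1
    · rintro rfl; exact ⟨Set.self_mem_Ici, ha⟩

lemma PC_nonempty {r : ℕ} {I : Fin r → Set ℝ} (h : ∀ j, (I j).Nonempty) :
    (PC I).Nonempty := ⟨fun j => (h j).some, fun j => (h j).some_mem⟩

lemma PC_proj {r : ℕ} {I : Fin r → Set ℝ} (h : ∀ j, (I j).Nonempty) (j : Fin r) :
    (fun x : Fin r → ℝ => x j) '' PC I = I j := by
  apply Set.Subset.antisymm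
  · rintro _ ⟨x, hx, rfl⟩; exact hx j
  · intro z hz
    refine ⟨Function.update (fun k => (h k).some) j z, fun k => ?_, by simp⟩
    rcases eq_or_ne k j with rfl | hk
    · simpa using hz
    · simpa [Function.update_of_ne hk] using (h k).some_mem

lemma PC_subset_iff {r : ℕ} {I I' : Fin r → Set ℝ} (h : ∀ j, (I j).Nonempty) :
    PC I ⊆ PC I' ↔ ∀ j, I j ⊆ I' j := by
  constructor
  · intro hsub j z hz
    obtain ⟨x, hx, hxj⟩ : ∃ x ∈ PC I, x j = z := by
      refine ⟨Function.update (fun k => (h k).some) j z, fun k => ?_, by simp⟩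
      rcases eq_or_ne k j with rfl | hk
      · simpa using hz
      · simpa [Function.update_of_ne hk] using (h k).some_mem
    exact hxj ▸ (hsub hx) j
  · intro hcomp x hx j; exact hcomp j (hx j)

lemma suppFace_PC {r : ℕ} {I : Fin r → Set ℝ} (h : ∀ j, (I j).Nonempty) :
    suppFace (PC I) = {j | ∃ y ∈ I j, y ≠ 0} := by
  ext j
  constructor
  · rintro ⟨x, hx, hxj⟩; exact ⟨x j, hx j, hxj⟩
  · rintro ⟨y, hy, hy0⟩
    refine ⟨Function.update (fun k => (h k).some) j y, fun k => ?_, by simpa⟩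
    rcases eq_or_ne k j with rfl | hk
    · simpa using hy
    · simpa [Function.update_of_ne hk] using (h k).some_mem

lemma suppFace_singleton {r : ℕ} (p : Fin r → ℝ) :
    suppFace ({p} : Set (Fin r → ℝ)) = {j | p j ≠ 0} := by
  ext j; simp [suppFace]

/-- grid points -/
def Grid {n r : ℕ} (u : Fin n → Fin r → ℝ) : Set (Fin r → ℝ) := {p | ∀ j, p j ∈ Vset u j}

lemma singleton_mem_gridCells {n r : ℕ} {u : Fin n → Fin r → ℝ} {p : Fin r → ℝ}
    (hp : p ∈ Grid u) : ({p} : Set (Fin r → ℝ)) ∈ gridCells u := by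
  refine ⟨fun j => {p j}, fun j => Or.inl ⟨p j, hp j, rfl⟩, ?_⟩
  ext x; simp [PC, funext_iff, Set.mem_singleton_iff, eq_comm]

lemma gridCells_nonempty {n r : ℕ} {u : Fin n → Fin r → ℝ} {C : Set (Fin r → ℝ)}
    (hC : C ∈ gridCells u) : ∃ p, p ∈ Grid u ∧ p ∈ C := by
  obtain ⟨I, hI, rfl⟩ := hC
  choose a haV hac using fun j => cells1_endpoint (hI j)
  exact ⟨a, haV, hac⟩

lemma grid_inter_PC {n r : ℕ} (u : Fin n → Fin r → ℝ) (I : Fin r → Set ℝ) :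
    Grid u ∩ PC I = PC (fun j => I j ∩ Vset u j) := by
  ext x; simp only [Grid, PC, Set.mem_inter_iff, Set.mem_setOf_eq]
  constructor
  · rintro ⟨h1, h2⟩ j; exact ⟨h2 j, h1 j⟩
  · intro h; exact ⟨fun j => (h j).2, fun j => (h j).1⟩

-- ############ rank machinery

open Finset in
/-- rank of `x` in the finite set `s`: number of smaller elements -/
def rankOf (s : Finset ℝ) (x : ℝ) : ℕ := (s.filter (fun y => y < x)).card

lemma rankOf_lt_rankOf {s : Finset ℝ} {x y : ℝ} (hx : x ∈ s) (hxy : x < y) :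
    rankOf s x < rankOf s y := by
  apply Finset.card_lt_card
  constructor
  · intro c hc
    simp only [Finset.mem_filter] at hc ⊢
    exact ⟨hc.1, hc.2.trans hxy⟩
  · intro hsub
    have : x ∈ s.filter (fun y_1 => y_1 < y) := by simp [hx, hxy]
    have := hsub this
    simp at this

lemma rankOf_mono {s : Finset ℝ} {x y : ℝ} (hxy : x ≤ y) :
    rankOf s x ≤ rankOf s y :=
  Finset.card_le_card (fun c hc => by
    simp only [Finset.mem_filter] at hc ⊢; exact ⟨hc.1, lt_of_lt_of_le hc.2 hxy⟩)

lemma le_iff_rankOf_le {s : Finset ℝ} {x y : ℝ} (hx : x ∈ s) (hy : y ∈ s) :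
    x ≤ y ↔ rankOf s x ≤ rankOf s y := by
  constructor
  · exact rankOf_mono
  · intro h
    by_contra hxy
    push_neg at hxy
    exact absurd h (not_le.2 (rankOf_lt_rankOf hy hxy))

lemma rankOf_injOn {s : Finset ℝ} {x y : ℝ} (hx : x ∈ s) (hy : y ∈ s)
    (h : rankOf s x = rankOf s y) : x = y :=
  le_antisymm ((le_iff_rankOf_le hx hy).2 h.le) ((le_iff_rankOf_le hy hx).2 h.ge)

lemma rankOf_adj {s : Finset ℝ} {a b : ℝ} (h : Adj (↑s) a b) :
    rankOf s b = rankOf s a + 1 := by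
  obtain ⟨ha, hb, hab, hbet⟩ := h
  have ha' : a ∈ s := by exact_mod_cast ha
  have : s.filter (fun y => y < b) = insert a (s.filter (fun y => y < a)) := by
    ext c
    simp only [Finset.mem_filter, Finset.mem_insert]
    constructor
    · rintro ⟨hc, hcb⟩
      rcases lt_trichotomy c a with h1 | h1 | h1
      · exact Or.inr ⟨hc, h1⟩
      · exact Or.inl h1
      · exact absurd ⟨h1, hcb⟩ (hbet c (by exact_mod_cast hc))
    · rintro (rfl | ⟨hc, hca⟩)
      · exact ⟨ha', hab⟩
      · exact ⟨hc, hca.trans hab⟩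
  rw [rankOf, rankOf, this, Finset.card_insert_of_notMem (by simp)]

lemma rankOf_zero {s : Finset ℝ} (hpos : ∀ y ∈ s, (0:ℝ) ≤ y) : rankOf s 0 = 0 := by
  rw [rankOf, Finset.card_eq_zero, Finset.filter_eq_empty_iff]
  intro y hy
  exact not_lt.2 (hpos y hy)

lemma eq_zero_of_rankOf_eq_zero {s : Finset ℝ} (h0 : (0:ℝ) ∈ s) {x : ℝ}
    (hx : x ∈ s) (hpos : ∀ y ∈ s, (0:ℝ) ≤ y) (h : rankOf s x = 0) : x = 0 := by
  by_contra hne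
  have hx0 : 0 < x := lt_of_le_of_ne (hpos x hx) (Ne.symm hne)
  have : (0:ℝ) ∈ s.filter (fun y => y < x) := by simp [h0, hx0]
  rw [rankOf, Finset.card_eq_zero] at h
  simp [h] at this

lemma exists_pred {s : Finset ℝ} (h0 : (0:ℝ) ∈ s) {x : ℝ} (hx : x ∈ s)
    (hpos : ∀ y ∈ s, (0:ℝ) ≤ y) (hne : x ≠ 0) : ∃ a, Adj (↑s) a x := by
  have hx0 : 0 < x := lt_of_le_of_ne (hpos x hx) (Ne.symm hne)
  have hne' : (s.filter (fun y => y < x)).Nonempty := ⟨0, by simp [h0, hx0]⟩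
  set a := (s.filter (fun y => y < x)).max' hne' with ha
  have haf : a ∈ s.filter (fun y => y < x) := Finset.max'_mem _ hne'
  simp only [Finset.mem_filter] at haf
  refine ⟨a, by exact_mod_cast haf.1, by exact_mod_cast hx, haf.2, ?_⟩
  rintro c hc ⟨h1, h2⟩
  have hc' : c ∈ s := by exact_mod_cast hc
  have : c ≤ a := Finset.le_max' _ c (by simp [hc', h2])
  exact absurd h1 (not_lt.2 this)

/-- the vertex set as a Finset -/
def FV {n r : ℕ} (u : Fin n → Fin r → ℝ) (j : Fin r) : Finset ℝ :=
  insert (0:ℝ) (Finset.image (fun i => u i j) Finset.univ)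

lemma FV_coe {n r : ℕ} (u : Fin n → Fin r → ℝ) (j : Fin r) :
    (↑(FV u j) : Set ℝ) = Vset u j := by
  simp [FV, Vset]

lemma mem_FV {n r : ℕ} {u : Fin n → Fin r → ℝ} {j : Fin r} {x : ℝ} :
    x ∈ FV u j ↔ x ∈ Vset u j := by
  rw [← FV_coe]; simp

-- ############ forward direction: minimal cells and the vertex map

section Forward

variable {n r : ℕ} {u u' : Fin n → Fin r → ℝ}

lemma subset_singleton_eq {p : Fin r → ℝ} {C : Set (Fin r → ℝ)}
    (hC : C ∈ gridCells u) (hsub : C ⊆ {p}) : C = {p} := by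
  obtain ⟨q, -, hq⟩ := gridCells_nonempty hC
  exact (Set.Nonempty.subset_singleton_iff ⟨q, hq⟩).1 hsub ▸ rfl

lemma exists_tau (e : {C // C ∈ gridCells u} ≃o {C // C ∈ gridCells u'})
    {p : Fin r → ℝ} (hp : p ∈ Grid u) :
    ∃ q, q ∈ Grid u' ∧
      ((e ⟨{p}, singleton_mem_gridCells hp⟩ : {C // C ∈ gridCells u'}) : Set (Fin r → ℝ)) = {q} := by
  set X := e ⟨{p}, singleton_mem_gridCells hp⟩ with hX
  have hmin : ∀ D ∈ gridCells u', D ⊆ (X : Set (Fin r → ℝ)) → D = (X : Set (Fin r → ℝ)) := by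
    intro D hD hsub
    have h1 : (⟨D, hD⟩ : {C // C ∈ gridCells u'}) ≤ X := hsub
    have h2 : e.symm ⟨D, hD⟩ ≤ ⟨{p}, singleton_mem_gridCells hp⟩ := by
      rw [hX] at h1
      simpa using e.symm.monotone h1
    have h3 : ((e.symm ⟨D, hD⟩ : {C // C ∈ gridCells u}) : Set (Fin r → ℝ)) = {p} :=
      subset_singleton_eq (e.symm ⟨D, hD⟩).2 h2
    have h4 : e.symm ⟨D, hD⟩ = ⟨{p}, singleton_mem_gridCells hp⟩ := Subtype.ext h3
    have h5 : (⟨D, hD⟩ : {C // C ∈ gridCells u'}) = X := by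
      rw [hX, ← h4, OrderIso.apply_symm_apply]
    exact congrArg Subtype.val h5
  obtain ⟨q, hqG, hq⟩ := gridCells_nonempty X.2
  have : ({q} : Set (Fin r → ℝ)) = (X : Set (Fin r → ℝ)) :=
    hmin {q} (singleton_mem_gridCells hqG) (Set.singleton_subset_iff.2 hq)
  exact ⟨q, hqG, this.symm⟩

lemma mem_e_iff (e : {C // C ∈ gridCells u} ≃o {C // C ∈ gridCells u'})
    {C : Set (Fin r → ℝ)} (hC : C ∈ gridCells u) {q' : Fin r → ℝ} (hq' : q' ∈ Grid u') :
    q' ∈ ((e ⟨C, hC⟩ : {C // C ∈ gridCells u'}) : Set (Fin r → ℝ)) ↔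
      ∃ p, ∃ hp : p ∈ Grid u, p ∈ C ∧
        ((e ⟨{p}, singleton_mem_gridCells hp⟩ : {C // C ∈ gridCells u'}) :
          Set (Fin r → ℝ)) = {q'} := by
  constructor
  · intro hmem
    obtain ⟨p, hpG, hsymm⟩ := exists_tau e.symm hq'
    have h4 : e.symm ⟨{q'}, singleton_mem_gridCells hq'⟩ = ⟨{p}, singleton_mem_gridCells hpG⟩ :=
      Subtype.ext hsymm
    have h5 : (e ⟨{p}, singleton_mem_gridCells hpG⟩ : {C // C ∈ gridCells u'})
        = ⟨{q'}, singleton_mem_gridCells hq'⟩ := by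
      rw [← h4, OrderIso.apply_symm_apply]
    have hle : e.symm ⟨{q'}, singleton_mem_gridCells hq'⟩ ≤ ⟨C, hC⟩ := by
      have h1 : (⟨{q'}, singleton_mem_gridCells hq'⟩ : {C // C ∈ gridCells u'}) ≤ e ⟨C, hC⟩ :=
        Set.singleton_subset_iff.2 hmem
      simpa using e.symm.monotone h1
    rw [h4] at hle
    have hpC : p ∈ C := hle rfl
    exact ⟨p, hpG, hpC, congrArg Subtype.val h5⟩
  · rintro ⟨p, hpG, hpC, hpe⟩
    have h1 : (⟨{p}, singleton_mem_gridCells hpG⟩ : {C // C ∈ gridCells u}) ≤ ⟨C, hC⟩ :=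
      Set.singleton_subset_iff.2 hpC
    have h2 := e.monotone h1
    have : q' ∈ ((e ⟨{p}, singleton_mem_gridCells hpG⟩ : {C // C ∈ gridCells u'}) :
        Set (Fin r → ℝ)) := by rw [hpe]; rfl
    exact h2 this

/-- a cell whose grid points are exactly two points: they differ in exactly one
coordinate, where they are adjacent. -/
lemma two_points {w : Fin n → Fin r → ℝ} {C : Set (Fin r → ℝ)} (hC : C ∈ gridCells w)
    {q1 q2 : Fin r → ℝ} (hne : q1 ≠ q2) (hset : Grid w ∩ C = {q1, q2}) :
    ∃ k, (∀ l, l ≠ k → q1 l = q2 l) ∧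
      (Adj (Vset w k) (q1 k) (q2 k) ∨ Adj (Vset w k) (q2 k) (q1 k)) := by
  obtain ⟨I, hI, rfl⟩ := hC
  have hdata : ∀ j, ∃ a b : ℝ, I j ∩ Vset w j = {a, b} ∧ (a = b ∨ Adj (Vset w j) a b) := by
    intro j
    rcases cells1_inter_V (hI j) with ⟨a, _, hA⟩ | ⟨a, b, hadj, hA⟩
    · exact ⟨a, a, by rw [hA]; simp, Or.inl rfl⟩
    · exact ⟨a, b, hA, Or.inr hadj⟩
  choose a b hA hab using hdata
  have hmem : ∀ x : Fin r → ℝ, (x ∈ Grid w ∧ x ∈ PC I) ↔ ∀ j, x j ∈ ({a j, b j} : Set ℝ) := by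
    intro x
    constructor
    · rintro ⟨h1, h2⟩ j
      rw [← hA j]; exact ⟨h2 j, h1 j⟩
    · intro h
      constructor
      · intro j
        have : x j ∈ I j ∩ Vset w j := (hA j) ▸ h j
        exact this.2
      · intro j
        have : x j ∈ I j ∩ Vset w j := (hA j) ▸ h j
        exact this.1
  have hset' : ∀ x : Fin r → ℝ, (∀ j, x j ∈ ({a j, b j} : Set ℝ)) ↔ (x = q1 ∨ x = q2) := by
    intro x
    rw [← hmem x]
    have h := Set.ext_iff.1 hset x
    simp only [Set.mem_inter_iff, Set.mem_insert_iff, Set.mem_singleton_iff] at h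
    exact h
  -- q1 and q2 satisfy the membership
  have hq1 : ∀ j, q1 j ∈ ({a j, b j} : Set ℝ) := (hset' q1).2 (Or.inl rfl)
  have hq2 : ∀ j, q2 j ∈ ({a j, b j} : Set ℝ) := (hset' q2).2 (Or.inr rfl)
  -- at most one coordinate with a ≠ b
  have huniq : ∀ k1 k2, a k1 ≠ b k1 → a k2 ≠ b k2 → k1 = k2 := by
    intro k1 k2 h1 h2
    by_contra hkk
    set p10 := Function.update a k1 (b k1) with hp10
    set p01 := Function.update a k2 (b k2) with hp01
    have hmema : a = q1 ∨ a = q2 := (hset' a).1 (fun j => Or.inl rfl)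
    have hmem10 : p10 = q1 ∨ p10 = q2 := by
      apply (hset' p10).1
      intro j
      rcases eq_or_ne j k1 with rfl | hj
      · simp [hp10]
      · simp [hp10, Function.update_of_ne hj]
    have hmem01 : p01 = q1 ∨ p01 = q2 := by
      apply (hset' p01).1
      intro j
      rcases eq_or_ne j k2 with rfl | hj
      · simp [hp01]
      · simp [hp01, Function.update_of_ne hj]
    have d1 : a ≠ p10 := by
      intro h; exact h1 (by rw [h, hp10]; simp)
    have d2 : a ≠ p01 := by
      intro h; exact h2 (by rw [h, hp01]; simp)
    have d3 : p10 ≠ p01 := by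
      intro h
      have h' := congrFun h k1
      have e1 : p10 k1 = b k1 := by simp [hp10]
      have e2 : p01 k1 = a k1 := by simp [hp01, Function.update_of_ne hkk]
      rw [e1, e2] at h'
      exact h1 h'.symm
    rcases hmema with h | h <;> rcases hmem10 with h' | h' <;> rcases hmem01 with h'' | h''
    · exact d1 (h.trans h'.symm)
    · exact d1 (h.trans h'.symm)
    · exact d2 (h.trans h''.symm)
    · exact d3 (h'.trans h''.symm)
    · exact d3 (h'.trans h''.symm)
    · exact d2 (h.trans h''.symm)
    · exact d1 (h.trans h'.symm)
    · exact d1 (h.trans h'.symm)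
  -- there is some coordinate where q1 ≠ q2
  obtain ⟨k, hk⟩ : ∃ k, q1 k ≠ q2 k := by
    by_contra hcon
    push_neg at hcon
    exact hne (funext hcon)
  have hkab : a k ≠ b k := by
    intro h
    apply hk
    rcases hq1 k with h1 | h1 <;> rcases hq2 k with h2 | h2 <;>
      (try simp only [Set.mem_singleton_iff] at h1 h2) <;> rw [h1, h2] <;>
      first | rfl | exact h | exact h.symm
  refine ⟨k, ?_, ?_⟩
  · intro l hl
    have habl : a l = b l := by
      by_contra hcon
      exact hl (huniq l k hcon hkab)
    rcases hq1 l with h1 | h1 <;> rcases hq2 l with h2 | h2 <;>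
      (try simp only [Set.mem_singleton_iff] at h1 h2) <;> rw [h1, h2] <;>
      first | rfl | exact habl | exact habl.symm
  · have hadj : Adj (Vset w k) (a k) (b k) := (hab k).resolve_left hkab
    rcases hq1 k with h1 | h1 <;> rcases hq2 k with h2 | h2 <;>
      (try simp only [Set.mem_singleton_iff] at h1 h2)
    · exact absurd (h1.trans h2.symm) hk
    · exact Or.inl (by rw [h1, h2]; exact hadj)
    · exact Or.inr (by rw [h1, h2]; exact hadj)
    · exact absurd (h1.trans h2.symm) hk

lemma update_mem_Grid {p : Fin r → ℝ} (hp : p ∈ Grid u) {j : Fin r} {aa : ℝ}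
    (ha : aa ∈ Vset u j) : Function.update p j aa ∈ Grid u := by
  intro l
  rcases eq_or_ne l j with rfl | hl
  · simpa using ha
  · simpa [Function.update_of_ne hl] using hp l

lemma edge_cell {p : Fin r → ℝ} (hp : p ∈ Grid u) {j : Fin r} {aa : ℝ}
    (hadj : Adj (Vset u j) aa (p j)) :
    (PC (fun l => if l = j then Set.Icc aa (p j) else {p l})) ∈ gridCells u ∧
    Grid u ∩ PC (fun l => if l = j then Set.Icc aa (p j) else {p l})
      = {Function.update p j aa, p} := by
  obtain ⟨haV, hpV, hlt, hbet⟩ := hadj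
  constructor
  · refine ⟨_, fun l => ?_, rfl⟩
    rcases eq_or_ne l j with rfl | hl
    · simp only [if_pos rfl]
      exact Or.inr (Or.inl ⟨aa, haV, p l, hpV, hlt, hbet, rfl⟩)
    · simp only [if_neg hl]
      exact Or.inl ⟨p l, hp l, rfl⟩
  · rw [grid_inter_PC]
    ext x
    simp only [PC, Set.mem_setOf_eq, Set.mem_insert_iff, Set.mem_singleton_iff]
    constructor
    · intro hx
      have hxl : ∀ l, l ≠ j → x l = p l := by
        intro l hl
        have := hx l
        rw [if_neg hl] at this
        exact this.1
      have hxj := hx j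
      rw [if_pos rfl] at hxj
      obtain ⟨⟨h1, h2⟩, hxV⟩ := hxj
      have : x j = aa ∨ x j = p j := by
        rcases eq_or_lt_of_le h1 with h | h
        · exact Or.inl h.symm
        rcases eq_or_lt_of_le h2 with h' | h'
        · exact Or.inr h'
        · exact absurd ⟨h, h'⟩ (hbet _ hxV)
      rcases this with h | h
      · left
        funext l
        rcases eq_or_ne l j with rfl | hl
        · simpa using h
        · rw [Function.update_of_ne hl]; exact hxl l hl
      · right
        funext l
        rcases eq_or_ne l j with rfl | hl
        · exact h
        · exact hxl l hl
    · rintro (rfl | rfl) l <;> rcases eq_or_ne l j with rfl | hl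
      · simp only [if_pos rfl, Function.update_self]
        exact ⟨Set.left_mem_Icc.2 hlt.le, haV⟩
      · simp only [if_neg hl, Function.update_of_ne hl]
        exact ⟨rfl, hp l⟩
      · simp only [if_pos rfl]
        exact ⟨Set.right_mem_Icc.2 hlt.le, hpV⟩
      · simp only [if_neg hl]
        exact ⟨rfl, hp l⟩

lemma tau_injective (e : {C // C ∈ gridCells u} ≃o {C // C ∈ gridCells u'})
    (tau : (Fin r → ℝ) → (Fin r → ℝ))
    (htau : ∀ p, ∀ hp : p ∈ Grid u, tau p ∈ Grid u' ∧
      ((e ⟨{p}, singleton_mem_gridCells hp⟩ : {C // C ∈ gridCells u'}) :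
        Set (Fin r → ℝ)) = {tau p})
    {p q : Fin r → ℝ} (hp : p ∈ Grid u) (hq : q ∈ Grid u)
    (h : tau p = tau q) : p = q := by
  have h1 := (htau p hp).2
  have h2 := (htau q hq).2
  rw [h] at h1
  have : (⟨{p}, singleton_mem_gridCells hp⟩ : {C // C ∈ gridCells u})
      = ⟨{q}, singleton_mem_gridCells hq⟩ :=
    e.injective (Subtype.ext (h1.trans h2.symm))
  have := congrArg Subtype.val this
  simpa using this

/-- key step: the images of two adjacent grid points differ in exactly one
coordinate, where they are adjacent. -/
lemma step_lemma (e : {C // C ∈ gridCells u} ≃o {C // C ∈ gridCells u'})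
    (tau : (Fin r → ℝ) → (Fin r → ℝ))
    (htau : ∀ p, ∀ hp : p ∈ Grid u, tau p ∈ Grid u' ∧
      ((e ⟨{p}, singleton_mem_gridCells hp⟩ : {C // C ∈ gridCells u'}) :
        Set (Fin r → ℝ)) = {tau p})
    {p : Fin r → ℝ} (hp : p ∈ Grid u) {j : Fin r} {aa : ℝ}
    (hadj : Adj (Vset u j) aa (p j)) :
    ∃ k, (∀ l, l ≠ k → tau p l = tau (Function.update p j aa) l) ∧
      (Adj (Vset u' k) (tau p k) (tau (Function.update p j aa) k) ∨
       Adj (Vset u' k) (tau (Function.update p j aa) k) (tau p k)) := by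
  set q := Function.update p j aa with hqdef
  have hq : q ∈ Grid u := update_mem_Grid hp hadj.1
  obtain ⟨hEd, hEdgrid⟩ := edge_cell hp hadj
  set Ed := PC (fun l => if l = j then Set.Icc aa (p j) else {p l}) with hEddef
  have hpEd : p ∈ Ed := by
    have : p ∈ Grid u ∩ Ed := by rw [hEdgrid]; exact Or.inr rfl
    exact this.2
  have hqEd : q ∈ Ed := by
    have : q ∈ Grid u ∩ Ed := by rw [hEdgrid]; exact Or.inl rfl
    exact this.2
  have hpq : p ≠ q := by
    intro h
    have := congrFun h j
    rw [hqdef] at this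
    simp at this
    exact absurd this.symm (ne_of_lt hadj.2.2.1)
  -- image of the edge cell
  have himg : Grid u' ∩ ((e ⟨Ed, hEd⟩ : {C // C ∈ gridCells u'}) : Set (Fin r → ℝ))
      = {tau p, tau q} := by
    ext x
    simp only [Set.mem_inter_iff, Set.mem_insert_iff, Set.mem_singleton_iff]
    constructor
    · rintro ⟨hxG, hxe⟩
      obtain ⟨p0, hp0G, hp0Ed, hp0e⟩ := (mem_e_iff e hEd hxG).1 hxe
      have : p0 ∈ Grid u ∩ Ed := ⟨hp0G, hp0Ed⟩
      rw [hEdgrid] at this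
      rcases this with h | h
      · right
        have h2 := (htau q hq).2
        have hsub : (⟨{p0}, singleton_mem_gridCells hp0G⟩ : {C // C ∈ gridCells u})
            = ⟨{q}, singleton_mem_gridCells hq⟩ := Subtype.ext (show ({p0} : Set (Fin r → ℝ)) = {q} by rw [h, hqdef])
        rw [hsub] at hp0e
        exact (Set.singleton_eq_singleton_iff.1 (h2.symm.trans hp0e)).symm
      · left
        rw [Set.mem_singleton_iff] at h
        have h2 := (htau p hp).2
        have hsub : (⟨{p0}, singleton_mem_gridCells hp0G⟩ : {C // C ∈ gridCells u})
            = ⟨{p}, singleton_mem_gridCells hp⟩ := Subtype.ext (show ({p0} : Set (Fin r → ℝ)) = {p} by rw [h])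
        rw [hsub] at hp0e
        exact (Set.singleton_eq_singleton_iff.1 (h2.symm.trans hp0e)).symm
    · rintro (rfl | rfl)
      · refine ⟨(htau p hp).1, ?_⟩
        exact (mem_e_iff e hEd (htau p hp).1).2 ⟨p, hp, hpEd, (htau p hp).2⟩
      · refine ⟨(htau q hq).1, ?_⟩
        exact (mem_e_iff e hEd (htau q hq).1).2 ⟨q, hq, hqEd, (htau q hq).2⟩
  have htne : tau p ≠ tau q := fun h => hpq (tau_injective e tau htau hp hq h)
  exact two_points (e ⟨Ed, hEd⟩).2 htne himg

lemma FV_nonneg (hu : ∀ i j, 0 ≤ u i j) (j : Fin r) : ∀ y ∈ FV u j, (0:ℝ) ≤ y := by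
  intro y hy
  exact Vset_nonneg hu j (mem_FV.1 hy)

lemma zero_mem_FV (u : Fin n → Fin r → ℝ) (j : Fin r) : (0:ℝ) ∈ FV u j :=
  mem_FV.2 (zero_mem_Vset u j)

lemma sum_split (f : Fin r → ℕ) (j : Fin r) :
    ∑ l, f l = f j + ∑ l ∈ Finset.univ.erase j, f l :=
  (Finset.add_sum_erase _ f (Finset.mem_univ j)).symm

lemma sum_update_eq (g : Fin r → ℝ → ℕ) (p : Fin r → ℝ) (j : Fin r) (v : ℝ) :
    ∑ l, g l (Function.update p j v l)
      = g j v + ∑ l ∈ Finset.univ.erase j, g l (p l) := by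
  rw [sum_split (fun l => g l (Function.update p j v l)) j, Function.update_self]
  congr 1
  apply Finset.sum_congr rfl
  intro l hl
  rw [Function.update_of_ne (Finset.ne_of_mem_erase hl)]

lemma supp_tau (e : {C // C ∈ gridCells u} ≃o {C // C ∈ gridCells u'})
    (hsupp : ∀ C : {C // C ∈ gridCells u},
      suppFace ((e C : {C // C ∈ gridCells u'}) : Set (Fin r → ℝ))
        = suppFace (C : Set (Fin r → ℝ)))
    (tau : (Fin r → ℝ) → (Fin r → ℝ))
    (htau : ∀ p, ∀ hp : p ∈ Grid u, tau p ∈ Grid u' ∧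
      ((e ⟨{p}, singleton_mem_gridCells hp⟩ : {C // C ∈ gridCells u'}) :
        Set (Fin r → ℝ)) = {tau p})
    {p : Fin r → ℝ} (hp : p ∈ Grid u) : ∀ l, tau p l = 0 ↔ p l = 0 := by
  have h := hsupp ⟨{p}, singleton_mem_gridCells hp⟩
  rw [(htau p hp).2] at h
  rw [suppFace_singleton, suppFace_singleton] at h
  intro l
  have h2 := Set.ext_iff.1 h l
  simp only [Set.mem_setOf_eq] at h2
  exact not_iff_not.1 h2

lemma tau_rank (hu : ∀ i j, 0 ≤ u i j) (hu' : ∀ i j, 0 ≤ u' i j)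
    (e : {C // C ∈ gridCells u} ≃o {C // C ∈ gridCells u'})
    (hsupp : ∀ C : {C // C ∈ gridCells u},
      suppFace ((e C : {C // C ∈ gridCells u'}) : Set (Fin r → ℝ))
        = suppFace (C : Set (Fin r → ℝ)))
    (tau : (Fin r → ℝ) → (Fin r → ℝ))
    (htau : ∀ p, ∀ hp : p ∈ Grid u, tau p ∈ Grid u' ∧
      ((e ⟨{p}, singleton_mem_gridCells hp⟩ : {C // C ∈ gridCells u'}) :
        Set (Fin r → ℝ)) = {tau p})
    (N : ℕ) :
    ∀ p, ∀ hp : p ∈ Grid u, (∑ l, rankOf (FV u l) (p l)) = N →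
      ∀ j, rankOf (FV u' j) (tau p j) = rankOf (FV u j) (p j) := by
  induction N using Nat.strong_induction_on with
  | _ N IH =>
  intro p hp hN j0
  have htpG : tau p ∈ Grid u' := (htau p hp).1
  have hsuppP : ∀ l, tau p l = 0 ↔ p l = 0 := supp_tau e hsupp tau htau hp
  by_cases hz : ∀ l, p l = 0
  · rw [hz j0, (hsuppP j0).2 (hz j0), rankOf_zero (FV_nonneg hu' j0),
      rankOf_zero (FV_nonneg hu j0)]
  push_neg at hz
  obtain ⟨j1, hj1⟩ := hz
  have hpj1V : p j1 ∈ FV u j1 := mem_FV.2 (hp j1)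
  obtain ⟨aa, hadjF⟩ := exists_pred (zero_mem_FV u j1) hpj1V (FV_nonneg hu j1) hj1
  have hadj : Adj (Vset u j1) aa (p j1) := by rwa [FV_coe] at hadjF
  have hrankp1 : rankOf (FV u j1) (p j1) = rankOf (FV u j1) aa + 1 := rankOf_adj hadjF
  set q1 := Function.update p j1 aa with hq1def
  have hq1G : q1 ∈ Grid u := update_mem_Grid hp hadj.1
  have hq1val : ∀ l, l ≠ j1 → q1 l = p l := fun l hl => Function.update_of_ne hl _ _
  have hq1j1 : q1 j1 = aa := Function.update_self _ _ _
  have hsum1 : (∑ l, rankOf (FV u l) (q1 l)) + 1 = N := by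
    have e1 := sum_update_eq (fun l v => rankOf (FV u l) v) p j1 aa
    have e2 := sum_split (fun l => rankOf (FV u l) (p l)) j1
    rw [hq1def, e1, ← hN, e2, hrankp1]
    omega
  have IH1 : ∀ l, rankOf (FV u' l) (tau q1 l) = rankOf (FV u l) (q1 l) :=
    fun l => IH _ (by omega) q1 hq1G rfl l
  obtain ⟨k1, hk1a, hk1adj⟩ := step_lemma e tau htau hp hadj
  rw [← hq1def] at hk1a hk1adj
  have htq1G : tau q1 ∈ Grid u' := (htau q1 hq1G).1
  have hmemtp : ∀ l, tau p l ∈ FV u' l := fun l => mem_FV.2 (htpG l)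
  have hmemtq1 : ∀ l, tau q1 l ∈ FV u' l := fun l => mem_FV.2 (htq1G l)
  have hadjrank : rankOf (FV u' k1) (tau p k1) + 1 = rankOf (FV u' k1) (tau q1 k1)
               ∨ rankOf (FV u' k1) (tau q1 k1) + 1 = rankOf (FV u' k1) (tau p k1) := by
    rcases hk1adj with h | h
    · left; exact (rankOf_adj (by rwa [FV_coe])).symm
    · right; exact (rankOf_adj (by rwa [FV_coe])).symm
  have hk1j1 : k1 = j1 := by
    by_contra hkj
    by_cases hpk1 : p k1 = 0
    · have e1 : q1 k1 = 0 := by rw [hq1val k1 hkj, hpk1]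
      have e2 : rankOf (FV u' k1) (tau q1 k1) = 0 := by
        rw [IH1 k1, e1, rankOf_zero (FV_nonneg hu k1)]
      have e3 : tau q1 k1 = 0 :=
        eq_zero_of_rankOf_eq_zero (zero_mem_FV u' k1) (hmemtq1 k1) (FV_nonneg hu' k1) e2
      have e4 : tau p k1 = 0 := (hsuppP k1).2 hpk1
      rcases hk1adj with h | h
      · rw [e3, e4] at h; exact lt_irrefl 0 h.2.2.1
      · rw [e3, e4] at h; exact lt_irrefl 0 h.2.2.1
    · -- second nonzero coordinate k1
      have hpk1V : p k1 ∈ FV u k1 := mem_FV.2 (hp k1)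
      obtain ⟨bb, hadj2F⟩ := exists_pred (zero_mem_FV u k1) hpk1V (FV_nonneg hu k1) hpk1
      have hadj2 : Adj (Vset u k1) bb (p k1) := by rwa [FV_coe] at hadj2F
      have hrankp2 : rankOf (FV u k1) (p k1) = rankOf (FV u k1) bb + 1 := rankOf_adj hadj2F
      set q2 := Function.update p k1 bb with hq2def
      have hq2G : q2 ∈ Grid u := update_mem_Grid hp hadj2.1
      have hsum2 : (∑ l, rankOf (FV u l) (q2 l)) + 1 = N := by
        have e1 := sum_update_eq (fun l v => rankOf (FV u l) v) p k1 bb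
        have e2 := sum_split (fun l => rankOf (FV u l) (p l)) k1
        rw [hq2def, e1, ← hN, e2, hrankp2]
        omega
      have IH2 : ∀ l, rankOf (FV u' l) (tau q2 l) = rankOf (FV u l) (q2 l) :=
        fun l => IH _ (by omega) q2 hq2G rfl l
      obtain ⟨k2, hk2a, hk2adj⟩ := step_lemma e tau htau hp hadj2
      rw [← hq2def] at hk2a hk2adj
      have hrtp_j1 : rankOf (FV u' j1) (tau p j1) + 1 = rankOf (FV u j1) (p j1) := by
        have h1 : tau p j1 = tau q1 j1 := hk1a j1 (fun h => hkj h.symm)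
        rw [h1, IH1 j1, hq1j1, hrankp1]
      have hk2j1 : k2 = j1 := by
        by_contra hk2j
        have h1 : tau p j1 = tau q2 j1 := hk2a j1 (fun h => hk2j h.symm)
        have h2 : q2 j1 = p j1 := Function.update_of_ne (fun h => hkj h.symm) _ _
        have h3 : rankOf (FV u' j1) (tau p j1) = rankOf (FV u j1) (p j1) := by
          rw [h1, IH2 j1, h2]
        omega
      -- double predecessor point
      set q12 := Function.update q1 k1 bb with hq12def
      have hq12G : q12 ∈ Grid u := update_mem_Grid hq1G hadj2.1
      have hq12val : ∀ l, l ≠ k1 → q12 l = q1 l := fun l hl => Function.update_of_ne hl _ _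
      have hq12k1 : q12 k1 = bb := Function.update_self _ _ _
      have hq1k1 : q1 k1 = p k1 := hq1val k1 hkj
      have hsum12 : (∑ l, rankOf (FV u l) (q12 l)) + 2 = N := by
        have e1 := sum_update_eq (fun l v => rankOf (FV u l) v) q1 k1 bb
        have e2 := sum_split (fun l => rankOf (FV u l) (q1 l)) k1
        rw [hq12def, e1]
        rw [e2, hq1k1, hrankp2] at hsum1
        omega
      have IH12 : ∀ l, rankOf (FV u' l) (tau q12 l) = rankOf (FV u l) (q12 l) :=
        fun l => IH _ (by omega) q12 hq12G rfl l
      have htq12G : tau q12 ∈ Grid u' := (htau q12 hq12G).1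
      have hmemtq12 : ∀ l, tau q12 l ∈ FV u' l := fun l => mem_FV.2 (htq12G l)
      have hranks : ∀ l, rankOf (FV u' l) (tau p l) = rankOf (FV u' l) (tau q12 l) := by
        intro l
        rcases eq_or_ne l j1 with rfl | hlj1
        · have h1 : q12 l = aa := by rw [hq12val l (fun h => hkj h.symm), hq1j1]
          rw [IH12 l, h1]
          omega
        rcases eq_or_ne l k1 with rfl | hlk1
        · have h1 : tau p l = tau q2 l := hk2a l (by rw [hk2j1]; exact fun h => hkj h)
          have h2 : q2 l = bb := Function.update_self _ _ _
          rw [h1, IH2 l, h2, IH12 l, hq12k1]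
        · have h1 : tau p l = tau q1 l := hk1a l hlk1
          rw [h1, IH1 l, IH12 l, hq12val l hlk1]
      have htpq : tau p = tau q12 :=
        funext fun l => rankOf_injOn (hmemtp l) (hmemtq12 l) (hranks l)
      have hpeq : p = q12 := tau_injective e tau htau hp hq12G htpq
      have : p j1 = aa := by
        rw [hpeq, hq12val j1 (fun h => hkj h.symm), hq1j1]
      rw [this] at hadj
      exact lt_irrefl aa hadj.2.2.1
  -- now k1 = j1
  subst hk1j1
  rcases eq_or_ne j0 k1 with rfl | hj0
  · -- the interesting coordinate
    rcases hadjrank with hor | hor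
    · -- bad orientation: tau p below tau q1
      exfalso
      have hrq1 : rankOf (FV u' j0) (tau q1 j0) = rankOf (FV u j0) aa := by
        rw [IH1 j0, hq1j1]
      have haa0 : aa ≠ 0 := by
        intro h
        rw [h, rankOf_zero (FV_nonneg hu j0)] at hrq1
        omega
      have haaV : aa ∈ FV u j0 := mem_FV.2 hadj.1
      obtain ⟨cc, hadjcF⟩ := exists_pred (zero_mem_FV u j0) haaV (FV_nonneg hu j0) haa0
      have hadjc : Adj (Vset u j0) cc aa := by rwa [FV_coe] at hadjcF
      have hrankaa : rankOf (FV u j0) aa = rankOf (FV u j0) cc + 1 := rankOf_adj hadjcF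
      set q11 := Function.update p j0 cc with hq11def
      have hq11G : q11 ∈ Grid u := update_mem_Grid hp hadjc.1
      have hq11val : ∀ l, l ≠ j0 → q11 l = p l := fun l hl => Function.update_of_ne hl _ _
      have hq11j0 : q11 j0 = cc := Function.update_self _ _ _
      have hsum11 : (∑ l, rankOf (FV u l) (q11 l)) + 2 = N := by
        have e1 := sum_update_eq (fun l v => rankOf (FV u l) v) p j0 cc
        have e2 := sum_split (fun l => rankOf (FV u l) (p l)) j0
        rw [hq11def, e1, ← hN, e2, hrankp1, hrankaa]
        omega
      have IH11 : ∀ l, rankOf (FV u' l) (tau q11 l) = rankOf (FV u l) (q11 l) :=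
        fun l => IH _ (by omega) q11 hq11G rfl l
      have htq11G : tau q11 ∈ Grid u' := (htau q11 hq11G).1
      have hmemtq11 : ∀ l, tau q11 l ∈ FV u' l := fun l => mem_FV.2 (htq11G l)
      have hranks : ∀ l, rankOf (FV u' l) (tau p l) = rankOf (FV u' l) (tau q11 l) := by
        intro l
        rcases eq_or_ne l j0 with rfl | hl
        · rw [IH11 l, hq11j0]
          omega
        · rw [hk1a l hl, IH1 l, IH11 l, hq11val l hl, hq1val l hl]
      have htpq : tau p = tau q11 :=
        funext fun l => rankOf_injOn (hmemtp l) (hmemtq11 l) (hranks l)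
      have hpeq : p = q11 := tau_injective e tau htau hp hq11G htpq
      have : p j0 = cc := by rw [hpeq, hq11j0]
      rw [this] at hadj
      exact absurd (hadjc.2.2.1.trans hadj.2.2.1) (lt_irrefl cc)
    · -- good orientation
      have hrq1 : rankOf (FV u' j0) (tau q1 j0) = rankOf (FV u j0) aa := by
        rw [IH1 j0, hq1j1]
      omega
  · rw [hk1a j0 hj0, IH1 j0, hq1val j0 hj0]

lemma u_mem_Grid (u : Fin n → Fin r → ℝ) (i : Fin n) : u i ∈ Grid u :=
  fun j => (mem_Vset_iff u j (u i j)).2 ⟨some i, rfl⟩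

theorem forward_dir (hu : ∀ i j, 0 ≤ u i j) (hu' : ∀ i j, 0 ≤ u' i j)
    (h : SameCombType u u') :
    ∀ (j : Fin r) (a b : Option (Fin n)),
      (val u j a ≤ val u j b ↔ val u' j a ≤ val u' j b) := by
  classical
  obtain ⟨e, hsupp, hmark⟩ := h
  have hex : ∀ p, ∀ hp : p ∈ Grid u, ∃ q, q ∈ Grid u' ∧
      ((e ⟨{p}, singleton_mem_gridCells hp⟩ : {C // C ∈ gridCells u'}) :
        Set (Fin r → ℝ)) = {q} := fun p hp => exists_tau e hp
  choose tau0 htau1 htau2 using hex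
  set tau : (Fin r → ℝ) → (Fin r → ℝ) :=
    fun p => if hp : p ∈ Grid u then tau0 p hp else p with htaudef
  have htau : ∀ p, ∀ hp : p ∈ Grid u, tau p ∈ Grid u' ∧
      ((e ⟨{p}, singleton_mem_gridCells hp⟩ : {C // C ∈ gridCells u'}) :
        Set (Fin r → ℝ)) = {tau p} := by
    intro p hp
    have : tau p = tau0 p hp := by rw [htaudef]; simp [hp]
    rw [this]
    exact ⟨htau1 p hp, htau2 p hp⟩
  have hmark' : ∀ i, u' i = tau (u i) := by
    intro i
    have h1 := hmark i (singleton_mem_gridCells (u_mem_Grid u i))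
    have h2 := (htau (u i) (u_mem_Grid u i)).2
    exact Set.singleton_eq_singleton_iff.1 (h1.symm.trans h2)
  have key : ∀ (i : Fin n) (j : Fin r),
      rankOf (FV u' j) (u' i j) = rankOf (FV u j) (u i j) := by
    intro i j
    have := tau_rank hu hu' e hsupp tau htau (∑ l, rankOf (FV u l) (u i l))
      (u i) (u_mem_Grid u i) rfl j
    rw [hmark' i]
    exact this
  intro j a b
  have hr : ∀ c : Option (Fin n),
      rankOf (FV u' j) (val u' j c) = rankOf (FV u j) (val u j c) := by
    intro c
    cases c with
    | none => simp only [val_none]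
              rw [rankOf_zero (FV_nonneg hu' j), rankOf_zero (FV_nonneg hu j)]
    | some i => exact key i j
  have hma : val u j a ∈ FV u j := mem_FV.2 ((mem_Vset_iff u j _).2 ⟨a, rfl⟩)
  have hmb : val u j b ∈ FV u j := mem_FV.2 ((mem_Vset_iff u j _).2 ⟨b, rfl⟩)
  have hma' : val u' j a ∈ FV u' j := mem_FV.2 ((mem_Vset_iff u' j _).2 ⟨a, rfl⟩)
  have hmb' : val u' j b ∈ FV u' j := mem_FV.2 ((mem_Vset_iff u' j _).2 ⟨b, rfl⟩)
  rw [le_iff_rankOf_le hma hmb, le_iff_rankOf_le hma' hmb', hr a, hr b]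

end Forward

-- ############ backward direction

section Backward

variable {n r : ℕ} {u u' : Fin n → Fin r → ℝ}

/-- the order-preserving correspondence between the vertex values -/
def phi (u u' : Fin n → Fin r → ℝ) (j : Fin r) (x : ℝ) : ℝ :=
  if h : ∃ a : Option (Fin n), val u j a = x then val u' j (Classical.choose h) else 0

/-- the agreement-of-preorders hypothesis -/
def Agree (u u' : Fin n → Fin r → ℝ) : Prop :=
  ∀ (j : Fin r) (a b : Option (Fin n)),
    (val u j a ≤ val u j b ↔ val u' j a ≤ val u' j b)

lemma Agree.symm (H : Agree u u') : Agree u' u := fun j a b => (H j a b).symm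

lemma phi_val (H : Agree u u') (j : Fin r) (a : Option (Fin n)) :
    phi u u' j (val u j a) = val u' j a := by
  have h : ∃ a' : Option (Fin n), val u j a' = val u j a := ⟨a, rfl⟩
  rw [phi, dif_pos h]
  have hc := Classical.choose_spec h
  apply le_antisymm
  · exact (H j _ a).1 hc.le
  · exact (H j a _).1 hc.ge

lemma phi_le (H : Agree u u') (j : Fin r) {x y : ℝ}
    (hx : x ∈ Vset u j) (hy : y ∈ Vset u j) :
    x ≤ y ↔ phi u u' j x ≤ phi u u' j y := by
  obtain ⟨a, rfl⟩ := (mem_Vset_iff u j x).1 hx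
  obtain ⟨b, rfl⟩ := (mem_Vset_iff u j y).1 hy
  rw [phi_val H, phi_val H]
  exact H j a b

lemma phi_lt (H : Agree u u') (j : Fin r) {x y : ℝ}
    (hx : x ∈ Vset u j) (hy : y ∈ Vset u j) :
    x < y ↔ phi u u' j x < phi u u' j y := by
  rw [lt_iff_not_ge, lt_iff_not_ge, phi_le H j hy hx]

lemma phi_inj (H : Agree u u') (j : Fin r) {x y : ℝ}
    (hx : x ∈ Vset u j) (hy : y ∈ Vset u j) :
    x = y ↔ phi u u' j x = phi u u' j y := by
  constructor
  · rintro rfl; rfl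
  · intro h
    exact le_antisymm ((phi_le H j hx hy).2 h.le) ((phi_le H j hy hx).2 h.ge)

lemma phi_zero (H : Agree u u') (j : Fin r) : phi u u' j 0 = 0 := by
  have := phi_val H j none
  simpa using this

lemma phi_mem (H : Agree u u') (j : Fin r) {x : ℝ} (hx : x ∈ Vset u j) :
    phi u u' j x ∈ Vset u' j := by
  obtain ⟨a, rfl⟩ := (mem_Vset_iff u j x).1 hx
  rw [phi_val H]
  exact (mem_Vset_iff u' j _).2 ⟨a, rfl⟩

lemma phi_phi (H : Agree u u') (j : Fin r) {x : ℝ} (hx : x ∈ Vset u j) :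
    phi u' u j (phi u u' j x) = x := by
  obtain ⟨a, rfl⟩ := (mem_Vset_iff u j x).1 hx
  rw [phi_val H, phi_val H.symm]

lemma phi_adj (H : Agree u u') (j : Fin r) {a b : ℝ} (h : Adj (Vset u j) a b) :
    Adj (Vset u' j) (phi u u' j a) (phi u u' j b) := by
  obtain ⟨ha, hb, hab, hbet⟩ := h
  refine ⟨phi_mem H j ha, phi_mem H j hb, (phi_lt H j ha hb).1 hab, ?_⟩
  intro c' hc' ⟨h1, h2⟩
  obtain ⟨cc, rfl⟩ := (mem_Vset_iff u' j c').1 hc'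
  have hceq : phi u u' j (val u j cc) = val u' j cc := phi_val H j cc
  rw [← hceq] at h1 h2
  have hcV : val u j cc ∈ Vset u j := (mem_Vset_iff u j _).2 ⟨cc, rfl⟩
  exact hbet _ hcV ⟨(phi_lt H j ha hcV).2 h1, (phi_lt H j hcV hb).2 h2⟩

lemma phi_max (H : Agree u u') (j : Fin r) {a : ℝ} (ha : a ∈ Vset u j)
    (hmax : ∀ c ∈ Vset u j, c ≤ a) :
    ∀ c ∈ Vset u' j, c ≤ phi u u' j a := by
  intro c' hc'
  obtain ⟨cc, rfl⟩ := (mem_Vset_iff u' j c').1 hc'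
  rw [← phi_val H j cc]
  have hcV : val u j cc ∈ Vset u j := (mem_Vset_iff u j _).2 ⟨cc, rfl⟩
  exact (phi_le H j hcV ha).1 (hmax _ hcV)

-- transport of 1-dimensional cells
open Classical in
def T1 (u u' : Fin n → Fin r → ℝ) (j : Fin r) (s : Set ℝ) : Set ℝ :=
  if BddAbove s then
    Set.Icc (sInf (phi u u' j '' (s ∩ Vset u j))) (sSup (phi u u' j '' (s ∩ Vset u j)))
  else Set.Ici (sInf (phi u u' j '' (s ∩ Vset u j)))

lemma T1_vertex (j : Fin r) {v : ℝ} (hv : v ∈ Vset u j) :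
    T1 u u' j {v} = {phi u u' j v} := by
  have h1 : ({v} : Set ℝ) ∩ Vset u j = {v} :=
    Set.inter_eq_left.2 (Set.singleton_subset_iff.2 hv)
  rw [T1, if_pos bddAbove_singleton, h1, Set.image_singleton, csInf_singleton,
    csSup_singleton, Set.Icc_self]

lemma Icc_inter_V {V : Set ℝ} {a b : ℝ} (h : Adj V a b) :
    Set.Icc a b ∩ V = {a, b} := by
  obtain ⟨ha, hb, hab, hbet⟩ := h
  ext x
  constructor
  · rintro ⟨⟨h1, h2⟩, hx⟩
    rcases eq_or_lt_of_le h1 with h | h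
    · exact Or.inl h.symm
    rcases eq_or_lt_of_le h2 with h' | h'
    · exact Or.inr h'
    · exact absurd ⟨h, h'⟩ (hbet x hx)
  · rintro (rfl | rfl)
    · exact ⟨Set.left_mem_Icc.2 hab.le, ha⟩
    · exact ⟨Set.right_mem_Icc.2 hab.le, hb⟩

lemma T1_edge (H : Agree u u') (j : Fin r) {a b : ℝ} (h : Adj (Vset u j) a b) :
    T1 u u' j (Set.Icc a b) = Set.Icc (phi u u' j a) (phi u u' j b) := by
  have h1 : Set.Icc a b ∩ Vset u j = {a, b} := Icc_inter_V h
  have hle : phi u u' j a ≤ phi u u' j b := (phi_le H j h.1 h.2.1).1 h.2.2.1.le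
  rw [T1, if_pos bddAbove_Icc, h1, Set.image_pair, csInf_pair, csSup_pair,
    inf_eq_left.2 hle, sup_eq_right.2 hle]

lemma not_bddAbove_Ici' (a : ℝ) : ¬ BddAbove (Set.Ici a) := by
  rintro ⟨ub, hub⟩
  have h1 : a ≤ ub := hub Set.self_mem_Ici
  have h2 : ub + 1 ≤ ub := hub (show a ≤ ub + 1 by linarith)
  linarith

lemma T1_ray (j : Fin r) {a : ℝ} (ha : a ∈ Vset u j)
    (hmax : ∀ c ∈ Vset u j, c ≤ a) :
    T1 u u' j (Set.Ici a) = Set.Ici (phi u u' j a) := by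
  have h1 : Set.Ici a ∩ Vset u j = {a} := by
    ext x
    constructor
    · rintro ⟨h1, hx⟩; exact le_antisymm (hmax x hx) h1
    · rintro rfl; exact ⟨Set.self_mem_Ici, ha⟩
  rw [T1, if_neg (not_bddAbove_Ici' a), h1, Set.image_singleton, csInf_singleton]

lemma T1_mem (H : Agree u u') (j : Fin r) {c : Set ℝ}
    (hc : c ∈ cells1 (Vset u j)) : T1 u u' j c ∈ cells1 (Vset u' j) := by
  rcases hc with ⟨v, hv, rfl⟩ | ⟨a, ha, b, hb, hab, hbet, rfl⟩ | ⟨a, ha, hmax, rfl⟩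
  · rw [T1_vertex j hv]
    exact Or.inl ⟨_, phi_mem H j hv, rfl⟩
  · rw [T1_edge H j ⟨ha, hb, hab, hbet⟩]
    obtain ⟨h1, h2, h3, h4⟩ := phi_adj H j ⟨ha, hb, hab, hbet⟩
    exact Or.inr (Or.inl ⟨_, h1, _, h2, h3, h4, rfl⟩)
  · rw [T1_ray j ha hmax]
    exact Or.inr (Or.inr ⟨_, phi_mem H j ha, phi_max H j ha hmax, rfl⟩)

lemma T1_T1 (H : Agree u u') (j : Fin r) {c : Set ℝ}
    (hc : c ∈ cells1 (Vset u j)) : T1 u' u j (T1 u u' j c) = c := by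
  rcases hc with ⟨v, hv, rfl⟩ | ⟨a, ha, b, hb, hab, hbet, rfl⟩ | ⟨a, ha, hmax, rfl⟩
  · rw [T1_vertex j hv, T1_vertex j (phi_mem H j hv), phi_phi H j hv]
  · rw [T1_edge H j ⟨ha, hb, hab, hbet⟩,
      T1_edge H.symm j (phi_adj H j ⟨ha, hb, hab, hbet⟩),
      phi_phi H j ha, phi_phi H j hb]
  · rw [T1_ray j ha hmax, T1_ray j (phi_mem H j ha) (phi_max H j ha hmax),
      phi_phi H j ha]

lemma T1_mono (H : Agree u u') (j : Fin r) {c d : Set ℝ}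
    (hc : c ∈ cells1 (Vset u j)) (hd : d ∈ cells1 (Vset u j)) (hcd : c ⊆ d) :
    T1 u u' j c ⊆ T1 u u' j d := by
  rcases hc with ⟨v, hv, rfl⟩ | ⟨a, ha, b, hb, hab, hbet, rfl⟩ | ⟨a, ha, hmax, rfl⟩ <;>
  rcases hd with ⟨w, hw, rfl⟩ | ⟨a', ha', b', hb', hab', hbet', rfl⟩ | ⟨a', ha', hmax', rfl⟩
  · have h := Set.singleton_subset_iff.1 hcd
    rw [Set.mem_singleton_iff] at h
    rw [T1_vertex j hv, T1_vertex j hw, h]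
  · have h : v ∈ Set.Icc a' b' := hcd rfl
    rw [T1_vertex j hv, T1_edge H j ⟨ha', hb', hab', hbet'⟩]
    exact Set.singleton_subset_iff.2
      ⟨(phi_le H j ha' hv).1 h.1, (phi_le H j hv hb').1 h.2⟩
  · have h : v ∈ Set.Ici a' := hcd rfl
    rw [T1_vertex j hv, T1_ray j ha' hmax']
    exact Set.singleton_subset_iff.2 ((phi_le H j ha' hv).1 h)
  · exfalso
    have h1 : a = w := hcd (Set.left_mem_Icc.2 hab.le)
    have h2 : b = w := hcd (Set.right_mem_Icc.2 hab.le)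
    rw [h1, h2] at hab
    exact lt_irrefl w hab
  · have h1 : a ∈ Set.Icc a' b' := hcd (Set.left_mem_Icc.2 hab.le)
    have h2 : b ∈ Set.Icc a' b' := hcd (Set.right_mem_Icc.2 hab.le)
    rw [T1_edge H j ⟨ha, hb, hab, hbet⟩, T1_edge H j ⟨ha', hb', hab', hbet'⟩]
    exact Set.Icc_subset_Icc ((phi_le H j ha' ha).1 h1.1) ((phi_le H j hb hb').1 h2.2)
  · have h1 : a ∈ Set.Ici a' := hcd (Set.left_mem_Icc.2 hab.le)
    rw [T1_edge H j ⟨ha, hb, hab, hbet⟩, T1_ray j ha' hmax']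
    intro x hx
    exact le_trans ((phi_le H j ha' ha).1 h1) hx.1
  · exfalso
    have h1 : a = w := hcd Set.self_mem_Ici
    have h2 : a + 1 = w := hcd (show a ≤ a + 1 by linarith)
    linarith
  · exfalso
    have h1 : max a b' + 1 ∈ Set.Icc a' b' :=
      hcd (show a ≤ max a b' + 1 by have := le_max_left a b'; linarith)
    have h2 := h1.2
    have := le_max_right a b'
    linarith
  · have h1 : a ∈ Set.Ici a' := hcd Set.self_mem_Ici
    rw [T1_ray j ha hmax, T1_ray j ha' hmax']
    exact Set.Ici_subset_Ici.2 ((phi_le H j ha' ha).1 h1)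

lemma T1_nonzero (H : Agree u u') (hu : ∀ i j, 0 ≤ u i j) (hu' : ∀ i j, 0 ≤ u' i j)
    (j : Fin r) {c : Set ℝ} (hc : c ∈ cells1 (Vset u j)) :
    (∃ y ∈ T1 u u' j c, y ≠ 0) ↔ (∃ y ∈ c, y ≠ 0) := by
  rcases hc with ⟨v, hv, rfl⟩ | ⟨a, ha, b, hb, hab, hbet, rfl⟩ | ⟨a, ha, hmax, rfl⟩
  · rw [T1_vertex j hv]
    simp only [Set.mem_singleton_iff, exists_eq_left]
    constructor
    · intro h hv0
      apply h
      rw [hv0, phi_zero H j]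
    · intro h hp0
      apply h
      rw [phi_inj H j hv (zero_mem_Vset u j), hp0, phi_zero H j]
  · rw [T1_edge H j ⟨ha, hb, hab, hbet⟩]
    have h1 : (0:ℝ) ≤ a := Vset_nonneg hu j ha
    have h2 : (0:ℝ) ≤ phi u u' j a := Vset_nonneg hu' j (phi_mem H j ha)
    have h3 : phi u u' j a < phi u u' j b := (phi_lt H j ha hb).1 hab
    constructor
    · intro _
      exact ⟨b, Set.right_mem_Icc.2 hab.le, by linarith⟩
    · intro _
      exact ⟨phi u u' j b, Set.right_mem_Icc.2 h3.le, by linarith⟩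
  · rw [T1_ray j ha hmax]
    constructor
    · intro _
      exact ⟨|a| + 1, by simp [Set.mem_Ici]; have := le_abs_self a; linarith,
        by have := abs_nonneg a; linarith⟩
    · intro _
      refine ⟨|phi u u' j a| + 1, ?_, ?_⟩
      · simp only [Set.mem_Ici]
        have := le_abs_self (phi u u' j a); linarith
      · have := abs_nonneg (phi u u' j a); linarith

/-- transport of grid cells -/
def EE (u u' : Fin n → Fin r → ℝ) (C : Set (Fin r → ℝ)) : Set (Fin r → ℝ) :=
  {x | ∀ j, x j ∈ T1 u u' j ((fun y => y j) '' C)}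

lemma EE_PC {I : Fin r → Set ℝ} (hne : ∀ j, (I j).Nonempty) :
    EE u u' (PC I) = PC (fun j => T1 u u' j (I j)) := by
  ext x
  exact forall_congr' fun j => by rw [PC_proj hne j]

lemma cells1_factors_nonempty {I : Fin r → Set ℝ}
    (hI : ∀ j, I j ∈ cells1 (Vset u j)) : ∀ j, (I j).Nonempty :=
  fun j => cells1_nonempty (hI j)

lemma EE_mem (H : Agree u u') {C : Set (Fin r → ℝ)} (hC : C ∈ gridCells u) :
    EE u u' C ∈ gridCells u' := by
  obtain ⟨I, hI, rfl⟩ := hC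
  rw [show ({x | ∀ j, x j ∈ I j} : Set (Fin r → ℝ)) = PC I from rfl,
    EE_PC (cells1_factors_nonempty hI)]
  exact ⟨_, fun j => T1_mem H j (hI j), rfl⟩

lemma EE_EE (H : Agree u u') {C : Set (Fin r → ℝ)} (hC : C ∈ gridCells u) :
    EE u' u (EE u u' C) = C := by
  obtain ⟨I, hI, rfl⟩ := hC
  rw [show ({x | ∀ j, x j ∈ I j} : Set (Fin r → ℝ)) = PC I from rfl,
    EE_PC (cells1_factors_nonempty hI),
    EE_PC (fun j => cells1_nonempty (T1_mem H j (hI j)))]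
  have : (fun j => T1 u' u j (T1 u u' j (I j))) = I := funext fun j => T1_T1 H j (hI j)
  rw [this]

lemma EE_mono (H : Agree u u') {C D : Set (Fin r → ℝ)} (hC : C ∈ gridCells u)
    (hD : D ∈ gridCells u) (hsub : C ⊆ D) : EE u u' C ⊆ EE u u' D := by
  obtain ⟨I, hI, rfl⟩ := hC
  obtain ⟨J, hJ, rfl⟩ := hD
  rw [show ({x | ∀ j, x j ∈ I j} : Set (Fin r → ℝ)) = PC I from rfl,
    show ({x | ∀ j, x j ∈ J j} : Set (Fin r → ℝ)) = PC J from rfl] at hsub ⊢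
  rw [EE_PC (cells1_factors_nonempty hI), EE_PC (cells1_factors_nonempty hJ)]
  refine (PC_subset_iff (fun j => cells1_nonempty (T1_mem H j (hI j)))).2 ?_
  intro j
  exact T1_mono H j (hI j) (hJ j) ((PC_subset_iff (cells1_factors_nonempty hI)).1 hsub j)

lemma EE_supp (H : Agree u u') (hu : ∀ i j, 0 ≤ u i j) (hu' : ∀ i j, 0 ≤ u' i j)
    {C : Set (Fin r → ℝ)} (hC : C ∈ gridCells u) : suppFace (EE u u' C) = suppFace C := by
  obtain ⟨I, hI, rfl⟩ := hC
  rw [show ({x | ∀ j, x j ∈ I j} : Set (Fin r → ℝ)) = PC I from rfl,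
    EE_PC (cells1_factors_nonempty hI),
    suppFace_PC (fun j => cells1_nonempty (T1_mem H j (hI j))),
    suppFace_PC (cells1_factors_nonempty hI)]
  ext j
  exact T1_nonzero H hu hu' j (hI j)

lemma EE_marking (H : Agree u u') (i : Fin n) :
    EE u u' ({u i} : Set (Fin r → ℝ)) = ({u' i} : Set (Fin r → ℝ)) := by
  have h1 : ({u i} : Set (Fin r → ℝ)) = PC (fun j => {u i j}) := by
    ext x; simp [PC, funext_iff, Set.mem_singleton_iff, eq_comm]
  have h2 : ({u' i} : Set (Fin r → ℝ)) = PC (fun j => {u' i j}) := by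
    ext x; simp [PC, funext_iff, Set.mem_singleton_iff, eq_comm]
  rw [h1, h2, EE_PC (fun j => Set.singleton_nonempty _)]
  have h3 : (fun j => T1 u u' j ({u i j} : Set ℝ)) = fun j => ({u' i j} : Set ℝ) := by
    funext j
    rw [T1_vertex j (show u i j ∈ Vset u j from (mem_Vset_iff u j (u i j)).2 ⟨some i, rfl⟩)]
    have h4 : phi u u' j (u i j) = u' i j := phi_val H j (some i)
    rw [h4]
  rw [h3]

theorem backward_dir (hu : ∀ i j, 0 ≤ u i j) (hu' : ∀ i j, 0 ≤ u' i j)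
    (H : Agree u u') : SameCombType u u' := by
  refine ⟨RelIso.mk (Equiv.mk
      (fun C => ⟨EE u u' C.1, EE_mem H C.2⟩)
      (fun D => ⟨EE u' u D.1, EE_mem H.symm D.2⟩)
      (fun C => Subtype.ext (EE_EE H C.2))
      (fun D => Subtype.ext (EE_EE H.symm D.2))) ?_, ?_, ?_⟩
  · intro C D
    constructor
    · intro h
      have h2 := EE_mono H.symm (EE_mem H C.2) (EE_mem H D.2) h
      rwa [EE_EE H C.2, EE_EE H D.2] at h2
    · intro h
      exact EE_mono H C.2 D.2 h
  · intro C
    exact EE_supp H hu hu' C.2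
  · intro i h
    exact EE_marking H i

end Backward

/-- Remark 2.10: the combinatorial type of an `n`-tuple is equivalent to the
data of the `r` total preorders `(T_1, …, T_r)` on the coordinate values. -/
theorem stmt1 {n r : ℕ} (u u' : Fin n → Fin r → ℝ)
    (hu : ∀ i j, 0 ≤ u i j) (hu' : ∀ i j, 0 ≤ u' i j) :
    SameCombType u u' ↔
      ∀ (j : Fin r) (a b : Option (Fin n)),
        (val u j a ≤ val u j b ↔ val u' j a ≤ val u' j b) :=
  ⟨forward_dir hu hu', fun H => backward_dir hu hu' H⟩

end
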